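/- Let n ∈ ℕ and p ∈ {0,1,…,n}. Let ξ ∈ ℤ^n satisfy ξ_i = i for 1 ≤ i ≤ n-p and ξ_i = i+1 for n-p+1 ≤ i ≤ n. Let ν ∈ ℤ^n satisfy |ν| = |ξ|. Then det(([ν_i ⊵ j])_{i,j ∈ [n]}) = Σ_{σ ∈ S_n, ν = ξ∘σ} (-1)^σ, where ξ∘σ := (ξ_{σ(1)}, …, ξ_{σ(n)}) and u ⊵ v means u - v ∈ {0,1}. -/

import Mathlib

open Finset

private lemma xi_inj (n p : ℕ) (ξ : Fin n → ℤ)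
    (hξ : ∀ i : Fin n,
      ξ i = if (i : ℕ) + 1 ≤ n - p then ((i : ℕ) : ℤ) + 1 else ((i : ℕ) : ℤ) + 2) :
    Function.Injective ξ := by
  intro i j hij
  rw [hξ i, hξ j] at hij
  have : (i : ℕ) = (j : ℕ) := by split_ifs at hij <;> omega
  exact Fin.ext this

private lemma perm_eq_one (n p : ℕ) (σ : Equiv.Perm (Fin n))
    (h : ∀ i : Fin n,
      (if (i : ℕ) + 1 ≤ n - p then ((i : ℕ) : ℤ) + 1 else ((i : ℕ) : ℤ) + 2)
          - (((σ i : ℕ) : ℤ) + 1) = 0 ∨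
      (if (i : ℕ) + 1 ≤ n - p then ((i : ℕ) : ℤ) + 1 else ((i : ℕ) : ℤ) + 2)
          - (((σ i : ℕ) : ℤ) + 1) = 1) : σ = 1 := by
  have part1 : ∀ m : ℕ, ∀ i : Fin n, (i : ℕ) = m → (i : ℕ) + 1 ≤ n - p → σ i = i := by
    intro m
    induction m using Nat.strong_induction_on with
    | _ m ih =>
      intro i him hle
      have hi := h i
      rw [if_pos hle] at hi
      rcases hi with hc | hc
      · exact Fin.ext (by omega)
      · -- (σ i : ℕ) = i - 1
        exfalso
        have hi1 : 1 ≤ (i : ℕ) := by omega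
        have hjn : (i : ℕ) - 1 < n := by omega
        set j : Fin n := ⟨(i : ℕ) - 1, hjn⟩ with hj
        have hji : σ j = j := ih ((i : ℕ) - 1) (by omega) j rfl (by simp [hj]; omega)
        have hsij : σ i = σ j := by
          rw [hji]
          exact Fin.ext (by simp [hj]; omega)
        have := σ.injective hsij
        have : (i : ℕ) = (j : ℕ) := congrArg Fin.val this
        simp [hj] at this
        omega
  have part2 : ∀ m : ℕ, ∀ i : Fin n, n - 1 - (i : ℕ) = m → ¬((i : ℕ) + 1 ≤ n - p) → σ i = i := by
    intro m
    induction m using Nat.strong_induction_on with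
    | _ m ih =>
      intro i him hle
      have hi := h i
      rw [if_neg hle] at hi
      rcases hi with hc | hc
      · -- (σ i : ℕ) = i + 1
        exfalso
        have hlt : (σ i : ℕ) < n := (σ i).isLt
        have hjn : (i : ℕ) + 1 < n := by omega
        set j : Fin n := ⟨(i : ℕ) + 1, hjn⟩ with hj
        have hji : σ j = j := ih (n - 1 - ((i : ℕ) + 1)) (by omega) j rfl (by simp [hj]; omega)
        have hsij : σ i = σ j := by
          rw [hji]
          exact Fin.ext (by simp [hj]; omega)
        have := σ.injective hsij
        have : (i : ℕ) = (j : ℕ) := congrArg Fin.val this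
        simp [hj] at this
      · exact Fin.ext (by omega)
  ext i
  by_cases hc : (i : ℕ) + 1 ≤ n - p
  · rw [part1 (i : ℕ) i rfl hc]; rfl
  · rw [part2 (n - 1 - (i : ℕ)) i rfl hc]; rfl

private lemma det_T (n p : ℕ) (ξ : Fin n → ℤ)
    (hξ : ∀ i : Fin n,
      ξ i = if (i : ℕ) + 1 ≤ n - p then ((i : ℕ) : ℤ) + 1 else ((i : ℕ) : ℤ) + 2) :
    Matrix.det (Matrix.of fun i j : Fin n =>
        if ξ i - (((j : ℕ) : ℤ) + 1) = 0 ∨ ξ i - (((j : ℕ) : ℤ) + 1) = 1 then (1 : ℤ) else 0)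
      = 1 := by
  rw [Matrix.det_apply]
  rw [Finset.sum_eq_single_of_mem (1 : Equiv.Perm (Fin n)) (Finset.mem_univ _)]
  · rw [Equiv.Perm.sign_one, one_smul]
    apply Finset.prod_eq_one
    intro i _
    simp only [Matrix.of_apply, Equiv.Perm.one_apply]
    rw [if_pos]
    rw [hξ i]
    split_ifs <;> omega
  · intro σ _ hσ
    have hprod : (∏ i, (Matrix.of fun i j : Fin n =>
        if ξ i - (((j : ℕ) : ℤ) + 1) = 0 ∨ ξ i - (((j : ℕ) : ℤ) + 1) = 1 then (1 : ℤ) else 0)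
        (σ i) i) = 0 := by
      by_contra hne
      apply hσ
      replace hne := Finset.prod_ne_zero_iff.mp hne
      have hcond : ∀ i : Fin n, ξ (σ i) - (((i : ℕ) : ℤ) + 1) = 0 ∨
          ξ (σ i) - (((i : ℕ) : ℤ) + 1) = 1 := by
        intro i
        have h2 := hne i (Finset.mem_univ _)
        simp only [Matrix.of_apply] at h2
        by_contra hcontra
        rw [if_neg hcontra] at h2
        exact h2 rfl
      have hinv : σ⁻¹ = 1 := by
        apply perm_eq_one n p
        intro i
        have h3 := hcond (σ⁻¹ i)
        rw [show σ (σ⁻¹ i) = i from σ.apply_symm_apply i, hξ i] at h3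
        exact h3
      rwa [inv_eq_one] at hinv
    rw [hprod, smul_zero]


/-- If ξ = (1,2,…,n-p, n-p+2, …, n+1) and |ν| = |ξ|, then
det(([ν_i ⊵ j])) = Σ_{σ : ν = ξ∘σ} (-1)^σ, where u ⊵ v means u - v ∈ {0,1}. -/
theorem xi_det (n : ℕ) (p : ℕ) (hp : p ≤ n) (ξ : Fin n → ℤ)
    (hξ : ∀ i : Fin n,
      ξ i = if (i : ℕ) + 1 ≤ n - p then ((i : ℕ) : ℤ) + 1 else ((i : ℕ) : ℤ) + 2)
    (ν : Fin n → ℤ) (hsum : ∑ i, ν i = ∑ i, ξ i) :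
    Matrix.det (Matrix.of fun i j : Fin n =>
        if ν i - (((j : ℕ) : ℤ) + 1) = 0 ∨ ν i - (((j : ℕ) : ℤ) + 1) = 1 then (1 : ℤ) else 0)
      = ∑ σ ∈ Finset.univ.filter (fun σ : Equiv.Perm (Fin n) => ∀ i, ν i = ξ (σ i)),
          (Equiv.Perm.sign σ : ℤ) := by
  classical
  have hξinj := xi_inj n p ξ hξ
  have hξrange : ∀ i : Fin n, 1 ≤ ξ i ∧ ξ i ≤ (n : ℤ) + 1 := by
    intro i
    have hi := i.isLt
    rw [hξ i]
    split_ifs <;> omega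
  by_cases hinj : Function.Injective ν
  case neg =>
    obtain ⟨i, j, hij, hne⟩ := Function.not_injective_iff.mp hinj
    rw [Matrix.det_zero_of_row_eq hne (by funext k; simp [hij])]
    have hfil : Finset.univ.filter (fun σ : Equiv.Perm (Fin n) => ∀ i, ν i = ξ (σ i)) = ∅ := by
      ext σ
      simp only [Finset.mem_filter, Finset.mem_univ, true_and, Finset.notMem_empty, iff_false]
      intro hσ
      apply hne
      apply σ.injective
      apply hξinj
      rw [← hσ i, ← hσ j, hij]
    rw [hfil, Finset.sum_empty]
  case pos =>
  by_cases hall : ∀ i, 1 ≤ ν i ∧ ν i ≤ (n : ℤ) + 1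
  case neg =>
    push_neg at hall
    obtain ⟨i, hi⟩ := hall
    rw [Matrix.det_eq_zero_of_row_eq_zero i (by
      intro j
      have hj := j.isLt
      simp only [Matrix.of_apply]
      rw [if_neg]
      rintro (h | h) <;> omega)]
    have hfil : Finset.univ.filter (fun σ : Equiv.Perm (Fin n) => ∀ i, ν i = ξ (σ i)) = ∅ := by
      ext σ
      simp only [Finset.mem_filter, Finset.mem_univ, true_and, Finset.notMem_empty, iff_false]
      intro hσ
      have := hξrange (σ i)
      rw [← hσ i] at this
      omega
    rw [hfil, Finset.sum_empty]
  case pos =>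
  -- image ν = image ξ
  have himg : Finset.image ν Finset.univ = Finset.image ξ Finset.univ := by
    set I : Finset ℤ := Finset.Icc 1 ((n : ℤ) + 1) with hI
    have hνI : Finset.image ν Finset.univ ⊆ I := by
      intro x hx
      obtain ⟨i, _, rfl⟩ := Finset.mem_image.mp hx
      exact Finset.mem_Icc.mpr (hall i)
    have hξI : Finset.image ξ Finset.univ ⊆ I := by
      intro x hx
      obtain ⟨i, _, rfl⟩ := Finset.mem_image.mp hx
      exact Finset.mem_Icc.mpr (hξrange i)
    have hcardI : I.card = n + 1 := by
      rw [hI, Int.card_Icc]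
      simp
    have hcardν : (Finset.image ν Finset.univ).card = n := by
      rw [Finset.card_image_of_injective _ hinj, Finset.card_univ, Fintype.card_fin]
    have hcardξ : (Finset.image ξ Finset.univ).card = n := by
      rw [Finset.card_image_of_injective _ hξinj, Finset.card_univ, Fintype.card_fin]
    have hsdν : (I \ Finset.image ν Finset.univ).card = 1 := by
      rw [Finset.card_sdiff_of_subset hνI, hcardI, hcardν]; omega
    have hsdξ : (I \ Finset.image ξ Finset.univ).card = 1 := by
      rw [Finset.card_sdiff_of_subset hξI, hcardI, hcardξ]; omega
    obtain ⟨a, ha⟩ := Finset.card_eq_one.mp hsdν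
    obtain ⟨b, hb⟩ := Finset.card_eq_one.mp hsdξ
    have hsumν : ∑ x ∈ Finset.image ν Finset.univ, x = ∑ i, ν i :=
      Finset.sum_image (fun x _ y _ h => hinj h)
    have hsumξ : ∑ x ∈ Finset.image ξ Finset.univ, x = ∑ i, ξ i :=
      Finset.sum_image (fun x _ y _ h => hξinj h)
    have h1 := Finset.sum_sdiff hνI (f := id)
    have h2 := Finset.sum_sdiff hξI (f := id)
    rw [ha] at h1
    rw [hb] at h2
    simp only [Finset.sum_singleton, id] at h1 h2
    have hab : a = b := by
      have e1 : a + ∑ i, ν i = ∑ x ∈ I, x := by rw [← hsumν]; exact h1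
      have e2 : b + ∑ i, ξ i = ∑ x ∈ I, x := by rw [← hsumξ]; exact h2
      omega
    calc Finset.image ν Finset.univ = I \ (I \ Finset.image ν Finset.univ) :=
          (Finset.sdiff_sdiff_eq_self hνI).symm
      _ = I \ (I \ Finset.image ξ Finset.univ) := by rw [ha, hb, hab]
      _ = Finset.image ξ Finset.univ := Finset.sdiff_sdiff_eq_self hξI
  have hex : ∀ i : Fin n, ∃ j : Fin n, ξ j = ν i := by
    intro i
    have : ν i ∈ Finset.image ξ Finset.univ := by
      rw [← himg]
      exact Finset.mem_image_of_mem ν (Finset.mem_univ i)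
    obtain ⟨j, _, hj⟩ := Finset.mem_image.mp this
    exact ⟨j, hj⟩
  choose f hf using hex
  have finj : Function.Injective f := fun a b hab => hinj (by rw [← hf a, ← hf b, hab])
  let σ₀ : Equiv.Perm (Fin n) := Equiv.ofBijective f (Finite.injective_iff_bijective.mp finj)
  have hν : ∀ i, ν i = ξ (σ₀ i) := fun i => (hf i).symm
  have hfil : Finset.univ.filter (fun σ : Equiv.Perm (Fin n) => ∀ i, ν i = ξ (σ i)) = {σ₀} := by
    ext σ
    simp only [Finset.mem_filter, Finset.mem_univ, true_and, Finset.mem_singleton]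
    constructor
    · intro hσ
      ext i
      exact congrArg Fin.val (hξinj (by rw [← hσ i, hν i]))
    · rintro rfl
      exact hν
  rw [hfil, Finset.sum_singleton]
  have hM : (Matrix.of fun i j : Fin n =>
        if ν i - (((j : ℕ) : ℤ) + 1) = 0 ∨ ν i - (((j : ℕ) : ℤ) + 1) = 1 then (1 : ℤ) else 0)
      = (Matrix.of fun i j : Fin n =>
        if ξ i - (((j : ℕ) : ℤ) + 1) = 0 ∨ ξ i - (((j : ℕ) : ℤ) + 1) = 1 then (1 : ℤ) else 0).submatrix
        σ₀ id := by
    ext i j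
    simp only [Matrix.of_apply, Matrix.submatrix_apply, id, hν i]
  rw [hM, Matrix.det_permute, det_T n p ξ hξ, mul_one]
  norm_cast
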